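/- For all odd integers j ≥ 1 and b ≥ 1 such that j = 1 or b = 1, the rooted tree RT(0^j, 1, b) is NOT super edge-graceful. -/

import Mathlib

/-- Edge type of the rooted tree `RT(a₀, …, a_{n-1})`: one edge from the root to each
child `i` (`Sum.inl i`), and one edge from child `i` to each of its `a i` leaf children
(`Sum.inr ⟨i, m⟩`).  The number of edges is `q = n + ∑ i, a i`. -/
abbrev RTEdge (n : ℕ) (a : Fin n → ℕ) := (Fin n) ⊕ (Σ i : Fin n, Fin (a i))

/-- Vertex type of the rooted tree `RT(a₀, …, a_{n-1})`: the root (`none`), the children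
`some (.inl i)` of the root, and the leaves `some (.inr ⟨i, m⟩)` attached to child `i`.
The number of vertices is `p = q + 1`. -/
abbrev RTVertex (n : ℕ) (a : Fin n → ℕ) := Option (RTEdge n a)

/-- The vertex labeling induced by an edge labeling `f`: each vertex gets the sum of the
labels of the edges incident with it. -/
def vertexSum {n : ℕ} (a : Fin n → ℕ) (f : RTEdge n a → ℤ) : RTVertex n a → ℤ
  | none => ∑ i : Fin n, f (Sum.inl i)
  | some (Sum.inl i) => f (Sum.inl i) + ∑ m : Fin (a i), f (Sum.inr ⟨i, m⟩)
  | some (Sum.inr ⟨i, m⟩) => f (Sum.inr ⟨i, m⟩)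

/-- The target label set for `q` objects: `{0, ±1, …, ±(q-1)/2}` if `q` is odd, and
`{±1, …, ±(q/2)}` if `q` is even. -/
noncomputable def segSet (q : ℕ) : Finset ℤ :=
  if q % 2 = 0 then (Finset.Icc (-((q / 2 : ℕ) : ℤ)) ((q / 2 : ℕ) : ℤ)).erase 0
  else Finset.Icc (-((q / 2 : ℕ) : ℤ)) ((q / 2 : ℕ) : ℤ)

/-- The rooted tree `RT(a₀, …, a_{n-1})` is super edge-graceful: there is an edge
labeling which is a bijection onto `{0, ±1, …, ±(q-1)/2}` (`q` odd) resp.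
`{±1, …, ±(q/2)}` (`q` even) whose induced vertex labeling is a bijection onto
`{0, ±1, …, ±(p-1)/2}` (`p` odd) resp. `{±1, …, ±(p/2)}` (`p` even), where
`q = n + ∑ i, a i` and `p = q + 1`. -/
def IsSEG {n : ℕ} (a : Fin n → ℕ) : Prop :=
  ∃ f : RTEdge n a → ℤ,
    Set.BijOn f Set.univ ↑(segSet (n + ∑ i, a i)) ∧
    Set.BijOn (vertexSum a f) Set.univ ↑(segSet (n + ∑ i, a i + 1))

/-- The sequence `(0^j, a, b)` of length `j + 2`. -/
def seq2 (j a b : ℕ) : Fin (j + 2) → ℕ :=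
  fun i => if (i : ℕ) < j then 0 else if (i : ℕ) = j then a else b

lemma sum_fin_zero {M : Type*} [AddCommMonoid M] {n : ℕ} (h : n = 0) (f : Fin n → M) :
    ∑ m, f m = 0 := by subst h; simp

lemma sum_fin_one {M : Type*} [AddCommMonoid M] {n : ℕ} (h : n = 1) (f : Fin n → M) :
    ∑ m, f m = f ⟨0, h ▸ Nat.one_pos⟩ := by subst h; exact Fin.sum_univ_one f

lemma sum_seq2' (j a b : ℕ) : ∑ i : Fin (j+2), seq2 j a b i = a + b := by
  have key : ∑ i : Fin (j+2), seq2 j a b i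
      = ∑ m ∈ Finset.range (j+2), (if m < j then (0:ℕ) else if m = j then a else b) :=
    Fin.sum_univ_eq_sum_range (fun m => if m < j then (0:ℕ) else if m = j then a else b) (j+2)
  rw [key, Finset.sum_range_succ, Finset.sum_range_succ,
    Finset.sum_eq_zero (fun m hm => by simp only [Finset.mem_range] at hm; simp [hm])]
  rw [if_neg (lt_irrefl j), if_pos rfl, if_neg (by omega : ¬ (j+1 < j)),
    if_neg (by omega : ¬ (j+1 = j))]
  omega


lemma mem_segSet_odd {q : ℕ} (hq : q % 2 = 1) {t : ℤ} :
    t ∈ segSet q ↔ (-((q/2 : ℕ) : ℤ) ≤ t ∧ t ≤ ((q/2 : ℕ) : ℤ)) := by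
  unfold segSet
  rw [if_neg (by omega)]
  simp [Finset.mem_Icc]

lemma mem_segSet_even {q : ℕ} (hq : q % 2 = 0) {t : ℤ} :
    t ∈ segSet q ↔ (t ≠ 0 ∧ -((q/2 : ℕ) : ℤ) ≤ t ∧ t ≤ ((q/2 : ℕ) : ℤ)) := by
  unfold segSet
  rw [if_pos hq]
  simp [Finset.mem_erase, Finset.mem_Icc, and_assoc]

/-- For all odd integers `j ≥ 1` and `b ≥ 1` such that `j = 1` or `b = 1`, the rooted
tree `RT(0^j, 1, b)` is not super edge-graceful. -/
theorem stmt5 (j b : ℕ) (hj : Odd j) (hj1 : 1 ≤ j) (hb : Odd b) (hb1 : 1 ≤ b)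
    (h : j = 1 ∨ b = 1) : ¬ IsSEG (seq2 j 1 b) := by
  obtain ⟨jm, hjm⟩ := hj
  obtain ⟨bm, hbm⟩ := hb
  rintro ⟨f, hE, hV⟩
  rw [sum_seq2'] at hE hV
  -- common facts
  have hginj : ∀ z1 z2 : RTVertex (j+2) (seq2 j 1 b),
      vertexSum (seq2 j 1 b) f z1 = vertexSum (seq2 j 1 b) f z2 → z1 = z2 :=
    fun z1 z2 hz => hV.2.1 (Set.mem_univ z1) (Set.mem_univ z2) hz
  have hfinj : ∀ e1 e2 : RTEdge (j+2) (seq2 j 1 b), f e1 = f e2 → e1 = e2 :=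
    fun e1 e2 hz => hE.2.1 (Set.mem_univ e1) (Set.mem_univ e2) hz
  have hg0 : ∀ z, vertexSum (seq2 j 1 b) f z ≠ 0 := by
    intro z hz
    have hm := hV.1 (Set.mem_univ z)
    rw [hz] at hm
    have h2 : (j + 2 + (1 + b) + 1) % 2 = 0 := by omega
    exact ((mem_segSet_even h2).mp (Finset.mem_coe.mp hm)).1 rfl
  have hchild : ∀ i : Fin (j+2), vertexSum (seq2 j 1 b) f (some (Sum.inl i)) =
      f (Sum.inl i) + ∑ m : Fin (seq2 j 1 b i), f (Sum.inr ⟨i, m⟩) := fun i => rfl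
  have hleaf : ∀ (i : Fin (j+2)) (m : Fin (seq2 j 1 b i)),
      vertexSum (seq2 j 1 b) f (some (Sum.inr ⟨i, m⟩)) = f (Sum.inr ⟨i, m⟩) := fun i m => rfl
  -- the zero edge
  have hq1 : (j + 2 + (1 + b)) % 2 = 1 := by omega
  have h0S : (0 : ℤ) ∈ (segSet (j + 2 + (1 + b)) : Set ℤ) :=
    Finset.mem_coe.mpr ((mem_segSet_odd hq1).mpr ⟨by omega, by omega⟩)
  obtain ⟨e0, -, hf0⟩ := hE.2.2 h0S
  rcases e0 with i | ⟨i, m⟩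
  swap
  · exact hg0 _ ((hleaf i m).trans hf0)
  have hi3 := i.isLt
  have hc : (i : ℕ) < j ∨ (i : ℕ) = j ∨ (i : ℕ) = j + 1 := by omega
  rcases hc with hlt | hij | hij1
  · refine hg0 (some (Sum.inl i)) ?_
    rw [hchild i, sum_fin_zero (by simp [seq2, hlt]), hf0, add_zero]
  · have ha1 : seq2 j 1 b i = 1 := by
      unfold seq2
      rw [if_neg (by omega), if_pos hij]
    have h1 := hchild i
    rw [sum_fin_one ha1] at h1
    have h2 : vertexSum (seq2 j 1 b) f (some (Sum.inl i)) =
        vertexSum (seq2 j 1 b) f (some (Sum.inr ⟨i, ⟨0, lt_of_lt_of_eq Nat.one_pos ha1.symm⟩⟩)) := by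
      rw [h1, hleaf, hf0, zero_add]
    have := hginj _ _ h2
    simp at this
  rcases h with rfl | rfl
  swap
  · -- b = 1 case
    have ha1 : seq2 j 1 1 i = 1 := by
      unfold seq2
      rw [if_neg (by omega), if_neg (by omega)]
    have h1 := hchild i
    rw [sum_fin_one ha1] at h1
    have h2 : vertexSum (seq2 j 1 1) f (some (Sum.inl i)) =
        vertexSum (seq2 j 1 1) f (some (Sum.inr ⟨i, ⟨0, lt_of_lt_of_eq Nat.one_pos ha1.symm⟩⟩)) := by
      rw [h1, hleaf, hf0, zero_add]
    have := hginj _ _ h2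
    simp at this
  -- j = 1 case
  have hnum : 1 + 2 + (1 + b) = b + 4 := by omega
  rw [hnum] at hE hV
  have hlt0 : (0:ℕ) < 1+2 := by omega
  have hlt1 : (1:ℕ) < 1+2 := by omega
  have hlt2 : (2:ℕ) < 1+2 := by omega
  obtain rfl : i = ⟨2, hlt2⟩ := Fin.ext hij1
  -- hf0 : f (Sum.inl ⟨2,hlt2⟩) = 0
  have ha0 : seq2 1 1 b ⟨0, hlt0⟩ = 0 := by simp [seq2]
  have ha1 : seq2 1 1 b ⟨1, hlt1⟩ = 1 := by simp [seq2]
  have hm0 : 0 < seq2 1 1 b ⟨1, hlt1⟩ := by omega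
  have hroot : vertexSum (seq2 1 1 b) f none =
      f (Sum.inl ⟨0,hlt0⟩) + f (Sum.inl ⟨1,hlt1⟩) + f (Sum.inl ⟨2,hlt2⟩) :=
    Fin.sum_univ_three (fun i2 => f (Sum.inl i2))
  have h0v : vertexSum (seq2 1 1 b) f (some (Sum.inl ⟨0,hlt0⟩)) = f (Sum.inl ⟨0,hlt0⟩) := by
    have h1 := hchild ⟨0,hlt0⟩
    rw [sum_fin_zero ha0] at h1
    rw [h1, add_zero]
  have hv : vertexSum (seq2 1 1 b) f (some (Sum.inl ⟨1,hlt1⟩)) =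
      f (Sum.inl ⟨1,hlt1⟩) + f (Sum.inr ⟨⟨1,hlt1⟩, ⟨0, hm0⟩⟩) := by
    have h1 := hchild ⟨1,hlt1⟩
    rw [sum_fin_one ha1] at h1
    exact h1
  have hK0 : (0:ℤ) ≤ (((b+4)/2 : ℕ) : ℤ) := Int.natCast_nonneg _
  have hfS : ∀ e, -(((b+4)/2 : ℕ) : ℤ) ≤ f e ∧ f e ≤ (((b+4)/2 : ℕ) : ℤ) := by
    intro e
    have hm := hE.1 (Set.mem_univ e)
    have hq1' : (b+4) % 2 = 1 := by omega
    exact (mem_segSet_odd hq1').mp (Finset.mem_coe.mp hm)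
  have hTc : ∀ t : ℤ, t ∈ (segSet (b + 4 + 1) : Set ℤ) ↔
      (t ≠ 0 ∧ -((((b+4)/2 : ℕ) : ℤ) + 1) ≤ t ∧ t ≤ (((b+4)/2 : ℕ) : ℤ) + 1) := by
    intro t
    have h2 : (b + 4 + 1) % 2 = 0 := by omega
    have h5 : (((b + 4 + 1) / 2 : ℕ) : ℤ) = (((b+4)/2 : ℕ) : ℤ) + 1 := by
      have : (b + 4 + 1) / 2 = (b+4)/2 + 1 := by omega
      rw [this]; push_cast; ring
    rw [Finset.mem_coe, mem_segSet_even h2, h5]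
  -- x ≠ 0
  have hx0 : f (Sum.inl ⟨1,hlt1⟩) ≠ 0 := by
    intro hx
    have := hfinj _ _ (hx.trans hf0.symm)
    simp at this
  -- the vertex attaining x is the big child ⟨2,_⟩
  have hxT : f (Sum.inl ⟨1,hlt1⟩) ∈ (segSet (b + 4 + 1) : Set ℤ) := by
    rw [hTc]
    have := hfS (Sum.inl ⟨1,hlt1⟩)
    exact ⟨hx0, by linarith [this.1], by linarith [this.2]⟩
  obtain ⟨zx, -, hzx⟩ := hV.2.2 hxT
  have hgw : vertexSum (seq2 1 1 b) f (some (Sum.inl ⟨2,hlt2⟩)) = f (Sum.inl ⟨1,hlt1⟩) := by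
    rcases zx with _ | (i2 | ⟨i2, m2⟩)
    · exfalso
      rw [hroot] at hzx
      have hl0 : f (Sum.inl ⟨0,hlt0⟩) = 0 := by linarith [hf0]
      have := hfinj _ _ (hl0.trans hf0.symm)
      simp at this
    · rcases i2 with ⟨iv, hiv⟩
      have hc2 : iv = 0 ∨ iv = 1 ∨ iv = 2 := by omega
      rcases hc2 with rfl | rfl | rfl
      · exfalso
        have hzx' : vertexSum (seq2 1 1 b) f (some (Sum.inl ⟨0,hlt0⟩)) = f (Sum.inl ⟨1,hlt1⟩) := hzx
        rw [h0v] at hzx'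
        have := hfinj _ _ hzx'
        simp at this
      · exfalso
        have hzx' : vertexSum (seq2 1 1 b) f (some (Sum.inl ⟨1,hlt1⟩)) = f (Sum.inl ⟨1,hlt1⟩) := hzx
        rw [hv] at hzx'
        have hu0 : f (Sum.inr ⟨⟨1,hlt1⟩, ⟨0, hm0⟩⟩) = 0 := by linarith
        have := hfinj _ _ (hu0.trans hf0.symm)
        simp at this
      · exact hzx
    · exfalso
      rw [hleaf] at hzx
      have := hfinj _ _ hzx
      simp at this
  -- vertices attaining ±(K+1)
  have hclass : ∀ z : RTVertex (1+2) (seq2 1 1 b), ∀ t : ℤ,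
      vertexSum (seq2 1 1 b) f z = t →
      (t = (((b+4)/2 : ℕ) : ℤ) + 1 ∨ t = -((((b+4)/2 : ℕ) : ℤ) + 1)) →
      z = none ∨ z = some (Sum.inl ⟨1,hlt1⟩) := by
    intro z t hz ht
    rcases z with _ | (i2 | ⟨i2, m2⟩)
    · exact Or.inl rfl
    · rcases i2 with ⟨iv, hiv⟩
      have hc2 : iv = 0 ∨ iv = 1 ∨ iv = 2 := by omega
      rcases hc2 with rfl | rfl | rfl
      · exfalso
        have hz' : vertexSum (seq2 1 1 b) f (some (Sum.inl ⟨0,hlt0⟩)) = t := hz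
        rw [h0v] at hz'
        have := hfS (Sum.inl ⟨0,hlt0⟩)
        rcases ht with rfl | rfl
        · linarith [this.2]
        · linarith [this.1]
      · exact Or.inr rfl
      · exfalso
        have hz' : vertexSum (seq2 1 1 b) f (some (Sum.inl ⟨2,hlt2⟩)) = t := hz
        rw [hgw] at hz'
        have := hfS (Sum.inl ⟨1,hlt1⟩)
        rcases ht with rfl | rfl
        · linarith [this.2]
        · linarith [this.1]
    · exfalso
      rw [hleaf] at hz
      have := hfS (Sum.inr ⟨i2, m2⟩)
      rcases ht with rfl | rfl
      · linarith [this.2]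
      · linarith [this.1]
  have hKT : ((((b+4)/2 : ℕ) : ℤ) + 1) ∈ (segSet (b + 4 + 1) : Set ℤ) := by
    rw [hTc]; exact ⟨by linarith, by linarith, by linarith⟩
  have hKT' : (-((((b+4)/2 : ℕ) : ℤ) + 1)) ∈ (segSet (b + 4 + 1) : Set ℤ) := by
    rw [hTc]; refine ⟨by intro hh; linarith, by linarith, by linarith⟩
  obtain ⟨z1, -, hz1⟩ := hV.2.2 hKT
  obtain ⟨z2, -, hz2⟩ := hV.2.2 hKT'
  have hb1 := hfS (Sum.inl ⟨0,hlt0⟩)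
  have hb2 := hfS (Sum.inr ⟨⟨1,hlt1⟩, ⟨0, hm0⟩⟩)
  rcases hclass z1 _ hz1 (Or.inl rfl) with rfl | rfl <;>
    rcases hclass z2 _ hz2 (Or.inr rfl) with rfl | rfl
  · rw [hz1] at hz2; linarith
  · rw [hroot] at hz1; rw [hv] at hz2; linarith [hf0]
  · rw [hroot] at hz2; rw [hv] at hz1; linarith [hf0]
  · rw [hz1] at hz2; linarith
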